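/- Let K ≥ 1 and d be natural numbers with K ≤ d+1, and let 0 ≤ l_1 < l_2 < … < l_K ≤ d be natural numbers. Then the K×K matrix whose (i,j) entry is the binomial coefficient (d+1−j choose l_i), regarded as a matrix over ℚ, has nonzero determinant. -/

import Mathlib

open Matrix Finset

lemma strictMono_gap {K : ℕ} {l : Fin K → ℕ} (h : StrictMono l) (i j : Fin K) (hij : i ≤ j) :
    l i + ((j : ℕ) - (i : ℕ)) ≤ l j := by
  obtain ⟨m, hm⟩ : ∃ m, (j : ℕ) = (i : ℕ) + m := ⟨(j : ℕ) - (i : ℕ), by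
    have := Fin.le_iff_val_le_val.mp hij; omega⟩
  have hrw : (j:ℕ) - (i:ℕ) = m := by omega
  rw [hrw]
  clear hrw hij
  induction m generalizing j with
  | zero =>
      have : j = i := Fin.ext (by omega)
      simp [this]
  | succ m ihm =>
      have hlt : (i : ℕ) + m < K := by have := j.isLt; omega
      have h1 : l i + m ≤ l ⟨(i:ℕ) + m, hlt⟩ := ihm ⟨(i:ℕ)+m, hlt⟩ rfl
      have h2 : l ⟨(i:ℕ) + m, hlt⟩ < l j := h (by simp only [Fin.lt_def]; omega)
      omega

lemma sum_sub_one {K : ℕ} (f : Fin K → ℕ) (hf : ∀ i, 1 ≤ f i) :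
    ∑ i, (f i - 1) + K = ∑ i, f i := by
  have h : ∑ i, f i = ∑ i : Fin K, ((f i - 1) + 1) :=
    Finset.sum_congr rfl (fun i _ => by have := hf i; omega)
  rw [h, Finset.sum_add_distrib]
  simp

lemma choose_cast_eq (n m : ℕ) :
    ((Nat.choose (n+1) (m+1) : ℚ)) = ((n+1 : ℕ) : ℚ) * (((m+1 : ℕ) : ℚ))⁻¹ * (Nat.choose n m : ℚ) := by
  have h := Nat.add_one_mul_choose_eq n m
  have hq : ((n+1 : ℕ) : ℚ) * (Nat.choose n m : ℚ)
      = (Nat.choose (n+1) (m+1) : ℚ) * ((m+1 : ℕ) : ℚ) := by exact_mod_cast h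
  have hm : ((m+1 : ℕ) : ℚ) ≠ 0 := by positivity
  field_simp
  push_cast at hq ⊢
  linarith [hq]

lemma key (S : ℕ) : ∀ (K a : ℕ) (l : Fin (K+1) → ℕ), (∑ i, l i) ≤ S →
    StrictMono l → (∀ i, l i ≤ a + i) →
    (Matrix.of fun i j : Fin (K+1) => ((Nat.choose (a + (j:ℕ)) (l i) : ℚ))).det ≠ 0 := by
  induction S with
  | zero =>
      intro K a l hsum hmono hle
      cases K with
      | zero =>
          have hd : (Matrix.of fun i j : Fin (0+1) => ((Nat.choose (a + (j:ℕ)) (l i) : ℚ))).det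
              = ((Nat.choose (a + ((0 : Fin (0+1)):ℕ)) (l 0) : ℚ)) := Matrix.det_fin_one _
          rw [hd]
          exact Nat.cast_ne_zero.mpr (Nat.choose_pos (hle 0)).ne'
      | succ k =>
          exfalso
          have h1 : l 0 < l 1 := hmono (by simp [Fin.lt_def])
          have h2 : l 1 ≤ ∑ i, l i :=
            Finset.single_le_sum (fun _ _ => Nat.zero_le _) (Finset.mem_univ 1)
          omega
  | succ S ih =>
      intro K a l hsum hmono hle
      by_cases h0 : l 0 = 0
      · cases K with
        | zero =>
            have hd : (Matrix.of fun i j : Fin (0+1) => ((Nat.choose (a + (j:ℕ)) (l i) : ℚ))).det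
                = ((Nat.choose (a + ((0 : Fin (0+1)):ℕ)) (l 0) : ℚ)) := Matrix.det_fin_one _
            rw [hd]
            exact Nat.cast_ne_zero.mpr (Nat.choose_pos (hle 0)).ne'
        | succ k =>
            have hl1 : ∀ i : Fin (k+1), 1 ≤ l i.succ := by
              intro i
              have : l 0 < l i.succ := hmono (by
                simp only [Fin.lt_def, Fin.val_succ, Fin.val_zero]; omega)
              omega
            set M : Matrix (Fin (k+2)) (Fin (k+2)) ℚ :=
              Matrix.of fun i j : Fin (k+2) => ((Nat.choose (a + (j:ℕ)) (l i) : ℚ)) with hM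
            set N : Matrix (Fin (k+2)) (Fin (k+2)) ℚ :=
              Matrix.of fun i j : Fin (k+2) =>
                if (j:ℕ) = 0 then ((Nat.choose a (l i) : ℚ))
                else ((Nat.choose (a + (j:ℕ)) (l i) : ℚ)
                  - (Nat.choose (a + (j:ℕ) - 1) (l i) : ℚ)) with hN
            have hMN : M.det = N.det := by
              apply Matrix.det_eq_of_forall_col_eq_smul_add_pred (fun _ => (1:ℚ))
              · intro i
                simp [hM, hN]
              · intro i j
                show M i j.succ = N i j.succ + 1 * M i j.castSucc
                simp only [hM, hN, Matrix.of_apply]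
                have h1 : ((j.succ : Fin (k+2)) : ℕ) = (j:ℕ)+1 := Fin.val_succ j
                have h2 : ((j.castSucc : Fin (k+2)) : ℕ) = (j:ℕ) := rfl
                rw [h1, h2, if_neg (by omega : ¬((j:ℕ)+1 = 0))]
                have harith : a + ((j:ℕ)+1) - 1 = a + (j:ℕ) := by omega
                rw [harith]
                ring
            rw [hMN, Matrix.det_succ_row_zero]
            rw [Finset.sum_eq_single_of_mem (0 : Fin (k+2)) (Finset.mem_univ _)]
            · have hN00 : N 0 0 = 1 := by simp [hN, h0]
              have hsub : N.submatrix Fin.succ (Fin.succAbove 0)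
                  = Matrix.of fun i j : Fin (k+1) =>
                      ((Nat.choose (a + (j:ℕ)) (l i.succ - 1) : ℚ)) := by
                ext i j
                obtain ⟨m, hm⟩ : ∃ m, l i.succ = m + 1 := ⟨l i.succ - 1, by have := hl1 i; omega⟩
                simp only [Matrix.submatrix_apply, Fin.succAbove_zero, hN, Matrix.of_apply]
                have h1 : ((j.succ : Fin (k+2)) : ℕ) = (j:ℕ)+1 := Fin.val_succ j
                rw [h1, if_neg (by omega : ¬((j:ℕ)+1 = 0))]
                have harith : a + ((j:ℕ)+1) - 1 = a + (j:ℕ) := by omega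
                have harith2 : a + ((j:ℕ)+1) = (a + (j:ℕ)) + 1 := by omega
                rw [harith, harith2, hm, Nat.add_sub_cancel,
                  Nat.choose_succ_succ' (a + (j:ℕ)) m]
                push_cast
                ring
              rw [hN00, hsub]
              have hsum' : ∑ i : Fin (k+1), (l i.succ - 1) ≤ S := by
                have hsplit : ∑ i : Fin (k+1+1), l i = l 0 + ∑ i : Fin (k+1), l i.succ :=
                  Fin.sum_univ_succ l
                have hsum2 := sum_sub_one (fun i : Fin (k+1) => l i.succ) hl1
                have e1 : ∑ i : Fin (k+1), (fun i : Fin (k+1) => l i.succ) i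
                    = ∑ i : Fin (k+1), l i.succ := rfl
                have e2 : ∑ i : Fin (k+1), ((fun i : Fin (k+1) => l i.succ) i - 1)
                    = ∑ i : Fin (k+1), (l i.succ - 1) := rfl
                omega
              have hmono' : StrictMono (fun i : Fin (k+1) => l i.succ - 1) := by
                intro i j hij
                have h3 := hmono (Fin.succ_lt_succ_iff.mpr hij)
                have h4 := hl1 i
                simp only []
                omega
              have hle' : ∀ i : Fin (k+1), (fun i : Fin (k+1) => l i.succ - 1) i ≤ a + (i:ℕ) := by
                intro i
                have := hle i.succ
                simp only [Fin.val_succ] at this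
                simp only []
                omega
              have hdet' := ih k a (fun i => l i.succ - 1) hsum' hmono' hle'
              simpa using hdet'
            · intro j _ hj
              obtain ⟨j', rfl⟩ := Fin.eq_succ_of_ne_zero hj
              have hne : ((j'.succ : Fin (k+2)) : ℕ) ≠ 0 := by simp [Fin.val_succ]
              have hz : N 0 j'.succ = 0 := by
                simp [hN, if_neg hne, h0]
              rw [hz]
              ring
      · -- l 0 ≥ 1 : rank-one scaling
        have hl1 : ∀ i, 1 ≤ l i := by
          intro i
          have := hmono.monotone (Fin.zero_le i)
          omega
        obtain ⟨b, rfl⟩ : ∃ b, a = b + 1 := ⟨a - 1, by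
          have h5 := hle 0
          simp only [Fin.val_zero] at h5
          have := hl1 0
          omega⟩
        have hEq : (Matrix.of fun i j : Fin (K+1) => ((Nat.choose (b + 1 + (j:ℕ)) (l i) : ℚ)))
            = Matrix.of (fun i j : Fin (K+1) => ((b + 1 + (j:ℕ) : ℕ) : ℚ) *
                (Matrix.of (fun i j : Fin (K+1) => (((l i : ℕ) : ℚ))⁻¹ *
                  ((Nat.choose (b + (j:ℕ)) (l i - 1) : ℚ))) i j)) := by
          ext i j
          obtain ⟨m, hm⟩ : ∃ m, l i = m + 1 := ⟨l i - 1, by have := hl1 i; omega⟩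
          have harith : b + 1 + (j:ℕ) = (b + (j:ℕ)) + 1 := by omega
          simp only [Matrix.of_apply, hm, harith, Nat.add_sub_cancel]
          rw [choose_cast_eq]
          ring
        have hcol := Matrix.det_mul_column (fun i : Fin (K+1) => (((l i : ℕ) : ℚ))⁻¹)
          (Matrix.of fun i j : Fin (K+1) => ((Nat.choose (b + (j:ℕ)) (l i - 1) : ℚ)))
        simp only [Matrix.of_apply] at hcol
        rw [hEq, Matrix.det_mul_row, hcol]
        apply mul_ne_zero
        · apply Finset.prod_ne_zero_iff.mpr
          intro j _
          positivity
        apply mul_ne_zero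
        · apply Finset.prod_ne_zero_iff.mpr
          intro i _
          have := hl1 i
          simp only [ne_eq, inv_eq_zero, Nat.cast_eq_zero]
          omega
        · refine ih K b (fun i => l i - 1) ?_ ?_ ?_
          · have hsum2 := sum_sub_one l hl1
            have e1 : ∑ i : Fin (K+1), (fun i : Fin (K+1) => l i - 1) i
                = ∑ i : Fin (K+1), (l i - 1) := rfl
            omega
          · intro i j hij
            have h3 := hmono hij
            have h4 := hl1 i
            simp only []
            omega
          · intro i
            have := hle i
            omega

theorem binomial_matrix_det_ne_zero (K d : ℕ) (hK1 : 1 ≤ K) (hKd : K ≤ d + 1)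
    (l : Fin K → ℕ) (hlmono : StrictMono l) (hld : ∀ i, l i ≤ d) :
    Matrix.det (Matrix.of fun i j : Fin K =>
      ((Nat.choose (d + 1 - ((j : ℕ) + 1)) (l i) : ℚ))) ≠ 0 := by
  obtain ⟨k, rfl⟩ : ∃ k, K = k + 1 := ⟨K - 1, by omega⟩
  have hkd : k ≤ d := by omega
  set a := d - k with ha
  have hle : ∀ i : Fin (k+1), l i ≤ a + (i:ℕ) := by
    intro i
    have hgap := strictMono_gap hlmono i (Fin.last k) (Fin.le_last i)
    have hlast := hld (Fin.last k)
    simp only [Fin.val_last] at hgap hlast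
    have := i.isLt
    omega
  have hMrw : (Matrix.of fun i j : Fin (k+1) =>
        ((Nat.choose (d + 1 - ((j : ℕ) + 1)) (l i) : ℚ)))
      = (Matrix.of fun i j : Fin (k+1) =>
          ((Nat.choose (a + (j:ℕ)) (l i) : ℚ))).submatrix id ⇑(Fin.revPerm) := by
    ext i j
    simp only [Matrix.submatrix_apply, Matrix.of_apply, id_eq, Fin.revPerm_apply]
    congr 2
    rw [Fin.val_rev]
    have := j.isLt
    omega
  rw [hMrw, Matrix.det_permute']
  apply mul_ne_zero
  · simp only [ne_eq, Int.cast_eq_zero]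
    exact_mod_cast (Equiv.Perm.sign Fin.revPerm).ne_zero
  · exact key (∑ i, l i) k a l le_rfl hlmono hle
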